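/- Let f(x) = e^{-bx} for b > 0, a > 0, and let h be measurable with |h(a,y)| ≤ C(1 + |log y|^j). Then T(h)(a,x) := (x^a e^{-bx})^{-1} ∫₀^x h(a,y) y^{a-1} e^{-by} dy satisfies: for 0 < x ≤ 1, |T(h)(a,x)| ≤ C'(1 + |log x|^j) for some constant C' depending only on a, b, j, C. -/

import Mathlib

open MeasureTheory Set

-- t^j * exp(-c t) is bounded on [0,∞)
lemma aux_pow_exp_bound (c : ℝ) (hc : 0 < c) (j : ℕ) :
    ∃ K ≥ 0, ∀ t : ℝ, 0 ≤ t → t ^ j * Real.exp (-(c * t)) ≤ K := by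
  refine ⟨j.factorial / c ^ j, by positivity, fun t ht => ?_⟩
  have h1 : (c * t) ^ j / j.factorial ≤ Real.exp (c * t) :=
    Real.pow_div_factorial_le_exp (c * t) (by positivity) j
  have h1' : c ^ j * t ^ j ≤ (j.factorial : ℝ) * Real.exp (c * t) := by
    rw [div_le_iff₀ (by positivity)] at h1
    calc c ^ j * t ^ j = (c * t) ^ j := (mul_pow c t j).symm
      _ ≤ Real.exp (c * t) * j.factorial := h1
      _ = (j.factorial : ℝ) * Real.exp (c * t) := by ring
  have hE : Real.exp (-(c * t)) * Real.exp (c * t) = 1 := by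
    rw [← Real.exp_add]; simp
  have hEpos : 0 < Real.exp (-(c * t)) := Real.exp_pos _
  rw [le_div_iff₀ (by positivity)]
  nlinarith [mul_le_mul_of_nonneg_right h1' hEpos.le]

-- key pointwise lemma
lemma aux_key (c : ℝ) (hc : 0 < c) (j : ℕ) :
    ∃ M ≥ 1, ∀ x y : ℝ, 0 < y → y ≤ x → x ≤ 1 →
      (1 + |Real.log y| ^ j) * y ^ c ≤ M * ((1 + |Real.log x| ^ j) * x ^ c) := by
  obtain ⟨K, hK0, hK⟩ := aux_pow_exp_bound c hc j
  refine ⟨1 + 2 ^ j + 2 ^ j * K, by nlinarith [pow_nonneg (by norm_num : (0:ℝ) ≤ 2) j], fun x y hy hyx hx1 => ?_⟩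
  have hx : 0 < x := lt_of_lt_of_le hy hyx
  have hlx : Real.log x ≤ 0 := Real.log_nonpos hx.le hx1
  have hly : Real.log y ≤ Real.log x := Real.log_le_log hy hyx
  set r := -Real.log x with hr
  set s := -Real.log y with hs
  have hr0 : 0 ≤ r := by simp [hr]; linarith
  have hsr : r ≤ s := by simp only [hr, hs, neg_le_neg_iff]; exact hly
  have hs0 : 0 ≤ s := le_trans hr0 hsr
  have hax : |Real.log x| = r := by rw [abs_of_nonpos hlx]
  have hay : |Real.log y| = s := by rw [abs_of_nonpos (by linarith)]
  have hxc : x ^ c = Real.exp (-(c * r)) := by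
    rw [Real.rpow_def_of_pos hx]; congr 1; simp [hr]; ring
  have hyc : y ^ c = Real.exp (-(c * s)) := by
    rw [Real.rpow_def_of_pos hy]; congr 1; simp [hs]; ring
  rw [hax, hay, hxc, hyc]
  set L := s - r with hL
  have hL0 : 0 ≤ L := by simp [hL]; linarith
  have hEs : Real.exp (-(c * s)) = Real.exp (-(c * r)) * Real.exp (-(c * L)) := by
    rw [← Real.exp_add]; congr 1; simp [hL]; ring
  have hEr : 0 < Real.exp (-(c * r)) := Real.exp_pos _
  have hEL : 0 < Real.exp (-(c * L)) := Real.exp_pos _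
  have hEL1 : Real.exp (-(c * L)) ≤ 1 := Real.exp_le_one_iff.mpr (by nlinarith)
  have hsplit : s ^ j ≤ 2 ^ j * (r ^ j + L ^ j) := by
    have h1 : s = r + L := by simp [hL]
    have h2 : r + L ≤ 2 * max r L := by
      have := le_max_left r L; have := le_max_right r L; linarith
    have h3 : (r + L) ^ j ≤ (2 * max r L) ^ j :=
      pow_le_pow_left₀ (by linarith) h2 j
    have h4 : (2 * max r L) ^ j = 2 ^ j * (max r L) ^ j := mul_pow 2 _ j
    have h5 : (max r L) ^ j ≤ r ^ j + L ^ j := by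
      rcases max_cases r L with ⟨hm, _⟩ | ⟨hm, _⟩ <;> rw [hm] <;>
        nlinarith [pow_nonneg hr0 j, pow_nonneg hL0 j]
    calc s ^ j = (r + L) ^ j := by rw [h1]
      _ ≤ 2 ^ j * (max r L) ^ j := by rw [← h4]; exact h3
      _ ≤ 2 ^ j * (r ^ j + L ^ j) := by
          apply mul_le_mul_of_nonneg_left h5 (by positivity)
  have hKL : L ^ j * Real.exp (-(c * L)) ≤ K := hK L hL0
  rw [hEs]
  have hgoal : (1 + s ^ j) * Real.exp (-(c * L)) ≤
      (1 + 2 ^ j + 2 ^ j * K) * (1 + r ^ j) := by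
    set E := Real.exp (-(c * L)) with hEdef
    have h6 : s ^ j * E ≤ 2 ^ j * (r ^ j + L ^ j) * E :=
      mul_le_mul_of_nonneg_right hsplit hEL.le
    have h7 : r ^ j * E ≤ r ^ j := mul_le_of_le_one_right (pow_nonneg hr0 j) hEL1
    have h2j : (0:ℝ) ≤ 2 ^ j := by positivity
    have h8 : 2 ^ j * (r ^ j + L ^ j) * E = 2 ^ j * (r ^ j * E) + 2 ^ j * (L ^ j * E) := by
      ring
    have h9 : 2 ^ j * (r ^ j * E) ≤ 2 ^ j * r ^ j := mul_le_mul_of_nonneg_left h7 h2j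
    have h10 : 2 ^ j * (L ^ j * E) ≤ 2 ^ j * K := mul_le_mul_of_nonneg_left hKL h2j
    have h11 : (0:ℝ) ≤ r ^ j := pow_nonneg hr0 j
    have h12 : (0:ℝ) ≤ 2 ^ j * K * r ^ j := by positivity
    have h13 : (0:ℝ) ≤ 2 ^ j * r ^ j := by positivity
    nlinarith [h6, h8, h9, h10, h11, h12, h13, hEL1, hEL.le]
  calc (1 + s ^ j) * (Real.exp (-(c * r)) * Real.exp (-(c * L)))
      = ((1 + s ^ j) * Real.exp (-(c * L))) * Real.exp (-(c * r)) := by ring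
    _ ≤ ((1 + 2 ^ j + 2 ^ j * K) * (1 + r ^ j)) * Real.exp (-(c * r)) :=
        mul_le_mul_of_nonneg_right hgoal hEr.le
    _ = (1 + 2 ^ j + 2 ^ j * K) * ((1 + r ^ j) * Real.exp (-(c * r))) := by ring

theorem stmt_18
    (b : ℝ) (hb : 0 < b) (a : ℝ) (ha : 0 < a) (j : ℕ)
    (C : ℝ) (hC : 0 ≤ C)
    (h : ℝ → ℝ → ℝ) (hmeas : Measurable (Function.uncurry h))
    (hbd : ∀ y ∈ Ioi (0:ℝ), |h a y| ≤ C * (1 + |Real.log y| ^ j))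
    (T : ℝ → ℝ)
    (hT : ∀ x, T x = (x ^ a * Real.exp (-b * x))⁻¹ *
      ∫ y in Ioo (0:ℝ) x, h a y * y ^ (a - 1) * Real.exp (-b * y)) :
    ∃ C' > 0, ∀ x : ℝ, 0 < x → x ≤ 1 → |T x| ≤ C' * (1 + |Real.log x| ^ j) := by
  obtain ⟨M, hM1, hkey⟩ := aux_key (a / 2) (by linarith) j
  have hM0 : 0 ≤ M := by linarith
  refine ⟨C * M * Real.exp b * (2 / a) + 1, by positivity, fun x hx hx1 => ?_⟩
  set c := a / 2 with hc
  have hc0 : 0 < c := by simp [hc]; linarith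
  -- the scalar in front
  have hpre : 0 < x ^ a * Real.exp (-b * x) := by positivity
  -- the bounding function
  set K0 := C * M * (1 + |Real.log x| ^ j) * x ^ c with hK0
  have hK0nn : 0 ≤ K0 := by
    have : (0:ℝ) ≤ 1 + |Real.log x| ^ j := by positivity
    have : (0:ℝ) ≤ x ^ c := by positivity
    positivity
  have hrint : IntegrableOn (fun y : ℝ => y ^ (c - 1)) (Ioo 0 x) := by
    rw [← intervalIntegrable_iff_integrableOn_Ioo_of_le hx.le]
    exact intervalIntegral.intervalIntegrable_rpow' (by linarith)
  have hgint : IntegrableOn (fun y : ℝ => K0 * y ^ (c - 1)) (Ioo 0 x) :=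
    hrint.const_mul K0
  -- pointwise bound
  have hbound : ∀ᵐ y ∂(volume.restrict (Ioo (0:ℝ) x)),
      ‖h a y * y ^ (a - 1) * Real.exp (-b * y)‖ ≤ K0 * y ^ (c - 1) := by
    filter_upwards [ae_restrict_mem measurableSet_Ioo] with y hy
    obtain ⟨hy0, hyx⟩ := hy
    have hya : (0:ℝ) < y ^ (a - 1) := Real.rpow_pos_of_pos hy0 _
    have hye : Real.exp (-b * y) ≤ 1 := Real.exp_le_one_iff.mpr (by nlinarith)
    have hyee : 0 < Real.exp (-b * y) := Real.exp_pos _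
    have hhb : |h a y| ≤ C * (1 + |Real.log y| ^ j) := hbd y hy0
    have hsplit : y ^ (a - 1) = y ^ (c - 1) * y ^ c := by
      rw [← Real.rpow_add hy0]; congr 1; simp [hc]; ring
    have hkey' : (1 + |Real.log y| ^ j) * y ^ c ≤
        M * ((1 + |Real.log x| ^ j) * x ^ c) := hkey x y hy0 hyx.le hx1
    have h1y : (0:ℝ) ≤ 1 + |Real.log y| ^ j := by positivity
    have hyc1 : (0:ℝ) < y ^ (c - 1) := Real.rpow_pos_of_pos hy0 _
    calc ‖h a y * y ^ (a - 1) * Real.exp (-b * y)‖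
        = |h a y| * y ^ (a - 1) * Real.exp (-b * y) := by
          rw [Real.norm_eq_abs, abs_mul, abs_mul, abs_of_pos hya,
            abs_of_pos hyee]
      _ ≤ |h a y| * y ^ (a - 1) :=
          mul_le_of_le_one_right (mul_nonneg (abs_nonneg _) hya.le) hye
      _ ≤ C * (1 + |Real.log y| ^ j) * y ^ (a - 1) :=
          mul_le_mul_of_nonneg_right hhb hya.le
      _ = C * ((1 + |Real.log y| ^ j) * y ^ c) * y ^ (c - 1) := by
          rw [hsplit]; ring
      _ ≤ C * (M * ((1 + |Real.log x| ^ j) * x ^ c)) * y ^ (c - 1) :=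
          mul_le_mul_of_nonneg_right (mul_le_mul_of_nonneg_left hkey' hC) hyc1.le
      _ = K0 * y ^ (c - 1) := by rw [hK0]; ring
  have hnorm : ‖∫ y in Ioo (0:ℝ) x, h a y * y ^ (a - 1) * Real.exp (-b * y)‖ ≤
      ∫ y in Ioo (0:ℝ) x, K0 * y ^ (c - 1) :=
    norm_integral_le_of_norm_le hgint hbound
  -- compute the integral of the bound
  have hval : ∫ y in Ioo (0:ℝ) x, (fun y : ℝ => y ^ (c - 1)) y = x ^ c / c := by
    rw [← integral_Ioc_eq_integral_Ioo, ← intervalIntegral.integral_of_le hx.le,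
      integral_rpow (Or.inl (by linarith))]
    rw [Real.zero_rpow (by intro hcc; rw [show c - 1 + 1 = c by ring] at hcc; linarith)]
    rw [show c - 1 + 1 = c by ring, sub_zero]
  have hval' : ∫ y in Ioo (0:ℝ) x, K0 * y ^ (c - 1) = K0 * (x ^ c / c) := by
    rw [integral_const_mul]
    rw [show (∫ y in Ioo (0:ℝ) x, y ^ (c - 1)) = x ^ c / c from hval]
  -- assemble
  have habsT : |T x| = (x ^ a * Real.exp (-b * x))⁻¹ *
      ‖∫ y in Ioo (0:ℝ) x, h a y * y ^ (a - 1) * Real.exp (-b * y)‖ := by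
    rw [hT x, abs_mul, abs_of_pos (inv_pos.mpr hpre), Real.norm_eq_abs]
  have hxa : x ^ c * x ^ c = x ^ a := by
    rw [← Real.rpow_add hx]; congr 1; rw [hc]; ring
  have hebx : (Real.exp (-b * x))⁻¹ ≤ Real.exp b := by
    rw [← Real.exp_neg]
    apply Real.exp_le_exp.mpr; nlinarith
  have hebx0 : 0 < (Real.exp (-b * x))⁻¹ := inv_pos.mpr (Real.exp_pos _)
  have h1x : (0:ℝ) ≤ 1 + |Real.log x| ^ j := by positivity
  have h1x1 : (1:ℝ) ≤ 1 + |Real.log x| ^ j := by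
    nlinarith [pow_nonneg (abs_nonneg (Real.log x)) j]
  have hxa0 : 0 < x ^ a := Real.rpow_pos_of_pos hx a
  have hxc0 : 0 < x ^ c := Real.rpow_pos_of_pos hx c
  rw [habsT]
  calc (x ^ a * Real.exp (-b * x))⁻¹ *
        ‖∫ y in Ioo (0:ℝ) x, h a y * y ^ (a - 1) * Real.exp (-b * y)‖
      ≤ (x ^ a * Real.exp (-b * x))⁻¹ * (K0 * (x ^ c / c)) := by
        rw [← hval']
        exact mul_le_mul_of_nonneg_left hnorm (by positivity)
    _ = (Real.exp (-b * x))⁻¹ * (C * M * (1 + |Real.log x| ^ j)) *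
          ((x ^ a)⁻¹ * (x ^ c * x ^ c)) / c := by
        rw [hK0, mul_inv]; ring
    _ = (Real.exp (-b * x))⁻¹ * (C * M * (1 + |Real.log x| ^ j)) / c := by
        rw [hxa, inv_mul_cancel₀ (ne_of_gt hxa0), mul_one]
    _ ≤ Real.exp b * (C * M * (1 + |Real.log x| ^ j)) / c := by
        gcongr
    _ = C * M * Real.exp b * (2 / a) * (1 + |Real.log x| ^ j) := by
        rw [hc]; field_simp
    _ ≤ (C * M * Real.exp b * (2 / a) + 1) * (1 + |Real.log x| ^ j) := by
        nlinarith [h1x, Real.exp_pos b]
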